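/- For every θ = (α, β, σ_ε²) ∈ ℝ × ℝ × (0,∞), almost surely (1/n) log R_n(θ) → −h₁(θ) as n → ∞, and moreover lim_{n→∞} (1/n) E[log R_n(θ)] = −h₁(θ), where h₁(α,β,σ_ε²) = (1/2) log(σ_ε²/σ₀²) + σ₀²/(2σ_ε²) + E_X[(η₀(X) − α − βX)²]/(2σ_ε²) − 1/2. -/

import Mathlib

open MeasureTheory Filter Finset ProbabilityTheory

/-- The `N(μ, s)` density (with variance `s`) evaluated at `y`. -/
noncomputable def normalPdf (y μ s : ℝ) : ℝ :=
  (Real.sqrt (2 * Real.pi * s))⁻¹ * Real.exp (-((y - μ) ^ 2) / (2 * s))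

/-- Expectation with respect to the uniform distribution on a set `𝒳 ⊆ ℝ`:
`E_X[g(X)] = |𝒳|⁻¹ ∫_𝒳 g(t) dt`. -/
noncomputable def EX (𝒳 : Set ℝ) (g : ℝ → ℝ) : ℝ :=
  (MeasureTheory.volume 𝒳).toReal⁻¹ * ∫ t in 𝒳, g t

/-- The Kullback–Leibler divergence rate of the linear model from the truth:
`h₁(α,β,σ_ε²) = (1/2) log(σ_ε²/σ₀²) + σ₀²/(2σ_ε²) + E_X[(η₀(X)-α-βX)²]/(2σ_ε²) - 1/2`. -/
noncomputable def hLin (𝒳 : Set ℝ) (η₀ : ℝ → ℝ) (s₀ α β s : ℝ) : ℝ :=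
  (1 / 2) * Real.log (s / s₀) + s₀ / (2 * s)
    + EX 𝒳 (fun t => (η₀ t - α - β * t) ^ 2) / (2 * s) - 1 / 2

open Real
open scoped NNReal ENNReal Topology

lemma rpow_two_eq (x : ℝ) : x ^ (2:ℝ) = x ^ (2:ℕ) := by
  rw [show ((2:ℝ)) = ((2:ℕ):ℝ) by norm_num, Real.rpow_natCast]

lemma integrable_sq_exp_neg_mul_sq {b : ℝ} (hb : 0 < b) :
    Integrable (fun x : ℝ => x ^ 2 * Real.exp (-b * x ^ 2)) := by
  have := integrable_rpow_mul_exp_neg_mul_sq hb (s := 2) (by norm_num)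
  simpa only [rpow_two_eq] using this

lemma integral_sq_exp_neg_mul_sq {b : ℝ} (hb : 0 < b) :
    ∫ x : ℝ, x ^ 2 * Real.exp (-b * x ^ 2) = Real.sqrt (π / b) / (2 * b) := by
  have hint := integrable_sq_exp_neg_mul_sq hb
  set f : ℝ → ℝ := fun x => x ^ 2 * Real.exp (-b * x ^ 2) with hf
  have heven : ∀ x : ℝ, f (-x) = f x := by intro x; simp [hf]
  have h1 : (∫ x in Set.Iio (0:ℝ), f x) = ∫ x in Set.Ioi (0:ℝ), f x := by
    rw [← integral_Iic_eq_integral_Iio, ← neg_zero, ← integral_comp_neg_Ioi]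
    simp only [heven, neg_zero]
  have h2 : (∫ x : ℝ, f x) = 2 * ∫ x in Set.Ioi (0:ℝ), f x := by
    rw [← intervalIntegral.integral_Iio_add_Ici (b := (0:ℝ)) hint.integrableOn hint.integrableOn,
      integral_Ici_eq_integral_Ioi, h1]
    ring
  have h3 : (∫ x in Set.Ioi (0:ℝ), f x)
      = b ^ (-((2:ℝ) + 1) / 2) * (1 / 2) * Real.Gamma (((2:ℝ) + 1) / 2) := by
    rw [← integral_rpow_mul_exp_neg_mul_rpow (by norm_num : (0:ℝ) < 2) (by norm_num : (-1:ℝ) < 2) hb]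
    exact setIntegral_congr_fun measurableSet_Ioi (fun x hx => by simp only [hf, rpow_two_eq])
  have hG : Real.Gamma (((2:ℝ) + 1) / 2) = Real.sqrt π / 2 := by
    have : ((2:ℝ) + 1) / 2 = 1 / 2 + 1 := by norm_num
    rw [this, Real.Gamma_add_one (by norm_num), Real.Gamma_one_half_eq]
    ring
  have hb' : (0:ℝ) < Real.sqrt b := Real.sqrt_pos.mpr hb
  have hrw : b ^ (-((2:ℝ) + 1) / 2) = (b * Real.sqrt b)⁻¹ := by
    have : (-((2:ℝ) + 1) / 2) = -(1 + 1/2) := by norm_num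
    rw [this, Real.rpow_neg hb.le, Real.rpow_add hb, Real.rpow_one, ← Real.sqrt_eq_rpow]
  rw [h2, h3, hG, hrw, Real.sqrt_div pi_pos.le]
  field_simp

open ProbabilityTheory

section GaussMoments

variable {v : ℝ≥0}

lemma integral_gaussianReal_eq (hv : v ≠ 0) (g : ℝ → ℝ) :
    ∫ x, g x ∂(gaussianReal 0 v) = ∫ x, gaussianPDFReal 0 v x * g x := by
  rw [gaussianReal_of_var_ne_zero _ hv]
  have hmeas : Measurable (fun x => Real.toNNReal (gaussianPDFReal 0 v x)) :=
    (measurable_gaussianPDFReal 0 v).real_toNNReal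
  rw [show gaussianPDF 0 v = fun x => ((Real.toNNReal (gaussianPDFReal 0 v x) : ℝ≥0) : ℝ≥0∞)
    from rfl]
  rw [integral_withDensity_eq_integral_smul hmeas g]
  congr 1; funext x
  rw [NNReal.smul_def, Real.coe_toNNReal _ (gaussianPDFReal_nonneg 0 v x), smul_eq_mul]

lemma integrable_gaussianReal_iff {v : ℝ≥0} (hv : v ≠ 0) (g : ℝ → ℝ) :
    Integrable g (gaussianReal 0 v) ↔
      Integrable (fun x => gaussianPDFReal 0 v x * g x) volume := by
  rw [gaussianReal_of_var_ne_zero _ hv]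
  have hmeas : Measurable (fun x => Real.toNNReal (gaussianPDFReal 0 v x)) :=
    (measurable_gaussianPDFReal 0 v).real_toNNReal
  rw [show gaussianPDF 0 v = fun x => ((Real.toNNReal (gaussianPDFReal 0 v x) : ℝ≥0) : ℝ≥0∞)
    from rfl]
  rw [integrable_withDensity_iff_integrable_smul hmeas]
  constructor <;> intro h <;> refine h.congr (Filter.Eventually.of_forall fun x => ?_) <;>
    simp only [NNReal.smul_def, Real.coe_toNNReal _ (gaussianPDFReal_nonneg 0 v x), smul_eq_mul]

lemma gaussPDF_mul_eq {v : ℝ≥0} (hv : v ≠ 0) (gx x : ℝ) :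
    gaussianPDFReal 0 v x * gx
      = (Real.sqrt (2 * π * v))⁻¹ * (gx * Real.exp (-(2*(v:ℝ))⁻¹ * x ^ 2)) := by
  have hv' : (0:ℝ) < v := by positivity
  rw [gaussianPDFReal]
  rw [show -(x - 0) ^ 2 / (2 * (v:ℝ)) = -(2*(v:ℝ))⁻¹ * x ^ 2 by field_simp; ring]
  ring

lemma integrable_sq_gaussianReal {v : ℝ≥0} (hv : v ≠ 0) :
    Integrable (fun x : ℝ => x ^ 2) (gaussianReal 0 v) := by
  have hv' : (0:ℝ) < v := by positivity
  rw [integrable_gaussianReal_iff hv]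
  refine Integrable.congr (((integrable_sq_exp_neg_mul_sq (b := (2*(v:ℝ))⁻¹)
    (by positivity)).const_mul ((Real.sqrt (2 * π * v))⁻¹)))
    (Filter.Eventually.of_forall fun x => ?_)
  simp only [gaussPDF_mul_eq hv]

lemma integral_sq_gaussianReal {v : ℝ≥0} (hv : v ≠ 0) :
    ∫ x, x ^ 2 ∂(gaussianReal 0 v) = (v : ℝ) := by
  have hv' : (0:ℝ) < v := by positivity
  rw [integral_gaussianReal_eq hv]
  simp only [gaussPDF_mul_eq hv]
  rw [integral_const_mul, integral_sq_exp_neg_mul_sq (by positivity)]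
  have h1 : π / (2*(v:ℝ))⁻¹ = 2 * π * v := by field_simp
  have h2 : (2:ℝ) * (2*(v:ℝ))⁻¹ = (v:ℝ)⁻¹ := by field_simp
  rw [h1, h2]
  have h3 : (0:ℝ) < Real.sqrt (2 * π * v) := Real.sqrt_pos.mpr (by positivity)
  field_simp

lemma integrable_id_gaussianReal {v : ℝ≥0} (hv : v ≠ 0) :
    Integrable (fun x : ℝ => x) (gaussianReal 0 v) := by
  have hv' : (0:ℝ) < v := by positivity
  rw [integrable_gaussianReal_iff hv]
  refine Integrable.congr (((integrable_mul_exp_neg_mul_sq (b := (2*(v:ℝ))⁻¹)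
    (by positivity)).const_mul ((Real.sqrt (2 * π * v))⁻¹)))
    (Filter.Eventually.of_forall fun x => ?_)
  simp only [gaussPDF_mul_eq hv]

lemma integral_id_gaussianReal {v : ℝ≥0} (hv : v ≠ 0) :
    ∫ x, x ∂(gaussianReal 0 v) = 0 := by
  rw [integral_gaussianReal_eq hv]
  set f : ℝ → ℝ := fun x => gaussianPDFReal 0 v x * x with hf
  have hodd : ∀ x : ℝ, f (-x) = - f x := by
    intro x
    simp only [hf, gaussianPDFReal]
    rw [show (-x - 0) ^ 2 = (x - 0) ^ 2 by ring]
    ring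
  have h := integral_neg_eq_self f (volume : Measure ℝ)
  have h2 : ∫ x, f (-x) = ∫ x, - f x := integral_congr_ae (Filter.Eventually.of_forall hodd)
  rw [h, integral_neg] at h2
  linarith

lemma gauss_exp_key {v : ℝ≥0} (hv : v ≠ 0) (t : ℝ) (x : ℝ) :
    gaussianPDFReal 0 v x * Real.exp (t * x)
      = Real.exp (t ^ 2 * v / 2) * gaussianPDFReal (t * v) v x := by
  have hv' : (0:ℝ) < v := by positivity
  simp only [gaussianPDFReal]
  rw [show -(x - 0)^2/(2*(v:ℝ)) = (t^2*(v:ℝ)/2 + -(x - t*(v:ℝ))^2/(2*(v:ℝ))) - t*x by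
    field_simp; ring, Real.exp_sub, Real.exp_add]
  have := Real.exp_ne_zero (t*x)
  field_simp

lemma integrable_exp_mul_gaussianReal {v : ℝ≥0} (hv : v ≠ 0) (t : ℝ) :
    Integrable (fun x : ℝ => Real.exp (t * x)) (gaussianReal 0 v) := by
  rw [integrable_gaussianReal_iff hv]
  refine Integrable.congr ((integrable_gaussianPDFReal (t * v) v).const_mul
    (Real.exp (t ^ 2 * v / 2))) (Filter.Eventually.of_forall fun x => ?_)
  simp only [← gauss_exp_key hv t x]

lemma integral_exp_mul_gaussianReal {v : ℝ≥0} (hv : v ≠ 0) (t : ℝ) :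
    ∫ x, Real.exp (t * x) ∂(gaussianReal 0 v) = Real.exp (t ^ 2 * v / 2) := by
  rw [integral_gaussianReal_eq hv]
  simp only [gauss_exp_key hv t]
  rw [integral_const_mul, integral_gaussianPDFReal_eq_one (t * v) hv, mul_one]

end GaussMoments

section Transfer

variable {Ω : Type*} [MeasurableSpace Ω] {P : Measure Ω} {v : ℝ≥0}

lemma rv_integrable_comp {X : Ω → ℝ} (hX : Measurable X) (hd : P.map X = gaussianReal 0 v)
    {g : ℝ → ℝ} (hg : Measurable g) (hint : Integrable g (gaussianReal 0 v)) :
    Integrable (fun ω => g (X ω)) P := by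
  rw [← hd] at hint
  exact (integrable_map_measure hg.aestronglyMeasurable hX.aemeasurable).mp hint

lemma rv_integral_comp {X : Ω → ℝ} (hX : Measurable X) (hd : P.map X = gaussianReal 0 v)
    {g : ℝ → ℝ} (hg : Measurable g) :
    ∫ ω, g (X ω) ∂P = ∫ x, g x ∂(gaussianReal 0 v) := by
  rw [← hd, integral_map hX.aemeasurable hg.aestronglyMeasurable]

lemma rv_mgf_eq (hv : v ≠ 0) {X : Ω → ℝ} (hX : Measurable X)
    (hd : P.map X = gaussianReal 0 v) (c t : ℝ) :
    mgf (fun ω => c * X ω) P t = Real.exp ((t*c) ^ 2 * v / 2) := by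
  rw [mgf]
  have : ∀ ω, Real.exp (t * (c * X ω)) = Real.exp ((t*c) * X ω) := by
    intro ω; ring_nf
  rw [integral_congr_ae (Filter.Eventually.of_forall this),
    rv_integral_comp hX hd (g := fun x => Real.exp ((t*c)*x))
      ((measurable_id.const_mul (t*c)).exp),
    integral_exp_mul_gaussianReal hv]

lemma rv_integrable_exp (hv : v ≠ 0) {X : Ω → ℝ} (hX : Measurable X)
    (hd : P.map X = gaussianReal 0 v) (c t : ℝ) :
    Integrable (fun ω => Real.exp (t * (c * X ω))) P := by
  have : ∀ ω, Real.exp (t * (c * X ω)) = Real.exp ((t*c) * X ω) := by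
    intro ω; ring_nf
  refine Integrable.congr ?_ (Filter.Eventually.of_forall fun ω => (this ω).symm)
  exact rv_integrable_comp hX hd (g := fun x => Real.exp ((t*c)*x))
    ((measurable_id.const_mul (t*c)).exp) (integrable_exp_mul_gaussianReal hv (t*c))

end Transfer

lemma cross_term_tendsto {Ω : Type*} [MeasurableSpace Ω] (P : Measure Ω) [IsProbabilityMeasure P]
    (ε : ℕ → Ω → ℝ) (hεmeas : ∀ i, Measurable (ε i))
    (hεindep : iIndepFun ε P)
    (v : ℝ≥0) (hv : v ≠ 0)
    (hεdist : ∀ i, P.map (ε i) = gaussianReal 0 v)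
    (b : ℕ → ℝ) (M : ℝ) (hM : 0 < M) (hbM : ∀ i, |b i| ≤ M) :
    ∀ᵐ ω ∂P, Tendsto (fun n : ℕ => (1/(n:ℝ)) * ∑ i ∈ Finset.Icc 1 n, b i * ε i ω)
      atTop (𝓝 0) := by
  have hv' : (0:ℝ) < v := by positivity
  -- the key one-sided Chernoff estimate, for arbitrary sign choices
  have key : ∀ c : ℕ → ℝ, (∀ i, |c i| ≤ M) → ∀ δ : ℝ, 0 < δ → ∀ n : ℕ,
      (P {ω | (n:ℝ) * δ ≤ ∑ i ∈ Finset.Icc 1 n, c i * ε i ω}).toReal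
        ≤ Real.exp (-(n:ℝ) * (δ^2 / (2 * M^2 * v))) := by
    intro c hc δ hδ n
    set t : ℝ := δ / (M^2 * v) with ht
    have ht0 : 0 < t := by positivity
    set X : ℕ → Ω → ℝ := fun i ω => c i * ε i ω with hX
    have hXmeas : ∀ i, Measurable (X i) := fun i => (hεmeas i).const_mul (c i)
    have hXindep : iIndepFun X P :=
      hεindep.comp (fun i x => c i * x) (fun i => measurable_id.const_mul (c i))
    have hXint : ∀ i ∈ Finset.Icc 1 n, Integrable (fun ω => Real.exp (t * X i ω)) P :=
      fun i _ => rv_integrable_exp hv (hεmeas i) (hεdist i) (c i) t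
    have hint_sum : Integrable (fun ω => Real.exp (t * (∑ i ∈ Finset.Icc 1 n, X i) ω)) P :=
      hXindep.integrable_exp_mul_sum hXmeas hXint
    have hset : {ω | (n:ℝ) * δ ≤ ∑ i ∈ Finset.Icc 1 n, c i * ε i ω}
        = {ω | (n:ℝ) * δ ≤ (∑ i ∈ Finset.Icc 1 n, X i) ω} := by
      ext ω; simp [hX]
    rw [hset]
    refine le_trans (measure_ge_le_exp_mul_mgf ((n:ℝ)*δ) ht0.le hint_sum) ?_
    rw [hXindep.mgf_sum hXmeas]
    have hmgf : ∀ i ∈ Finset.Icc 1 n, mgf (X i) P t ≤ Real.exp (t^2 * M^2 * v / 2) := by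
      intro i _
      rw [show X i = fun ω => c i * ε i ω from rfl, rv_mgf_eq hv (hεmeas i) (hεdist i)]
      rw [Real.exp_le_exp]
      have : (t * c i)^2 ≤ t^2 * M^2 := by
        rw [mul_pow]
        have h1 : (c i)^2 ≤ M^2 := by
          rw [← sq_abs]
          exact pow_le_pow_left₀ (abs_nonneg _) (hc i) 2
        nlinarith [sq_nonneg t]
      nlinarith [hv']
    calc Real.exp (-t * ((n:ℝ)*δ)) * ∏ i ∈ Finset.Icc 1 n, mgf (X i) P t
        ≤ Real.exp (-t * ((n:ℝ)*δ)) * ∏ i ∈ Finset.Icc 1 n, Real.exp (t^2 * M^2 * v / 2) := by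
          refine mul_le_mul_of_nonneg_left ?_ (Real.exp_pos _).le
          refine Finset.prod_le_prod (fun i _ => mgf_nonneg) hmgf
      _ = Real.exp (-(n:ℝ) * (δ^2 / (2 * M^2 * v))) := by
          rw [Finset.prod_const, Nat.card_Icc, ← Real.exp_nat_mul, ← Real.exp_add]
          congr 1
          simp only [Nat.add_sub_cancel]
          rw [ht]
          have hM2 : (M:ℝ)^2 ≠ 0 := by positivity
          have hvne : (v:ℝ) ≠ 0 := ne_of_gt hv'
          field_simp
          ring
  -- Borel–Cantelli step
  have key2 : ∀ δ : ℝ, 0 < δ → ∀ᵐ ω ∂P, ∀ᶠ n : ℕ in atTop,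
      |(1/(n:ℝ)) * ∑ i ∈ Finset.Icc 1 n, b i * ε i ω| < δ := by
    intro δ hδ
    set A : ℕ → Set Ω := fun n =>
      {ω | (n:ℝ) * δ ≤ ∑ i ∈ Finset.Icc 1 n, b i * ε i ω}
        ∪ {ω | (n:ℝ) * δ ≤ ∑ i ∈ Finset.Icc 1 n, (-b i) * ε i ω} with hA
    have hb1 := key b hbM δ hδ
    have hb2 := key (fun i => -b i) (fun i => by simpa using hbM i) δ hδ
    have hle : ∀ n, P (A n)
        ≤ ENNReal.ofReal (2 * Real.exp (-(n:ℝ) * (δ^2 / (2 * M^2 * v)))) := by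
      intro n
      refine le_trans (measure_union_le _ _) ?_
      rw [two_mul, ENNReal.ofReal_add (Real.exp_pos _).le (Real.exp_pos _).le]
      gcongr
      · exact (ENNReal.le_ofReal_iff_toReal_le (measure_ne_top P _)
          (Real.exp_pos _).le).mpr (hb1 n)
      · exact (ENNReal.le_ofReal_iff_toReal_le (measure_ne_top P _)
          (Real.exp_pos _).le).mpr (hb2 n)
    have hsummable : Summable (fun n : ℕ => 2 * Real.exp (-(n:ℝ) * (δ^2 / (2 * M^2 * v)))) := by
      have ha : 0 < δ^2 / (2 * M^2 * v) := by positivity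
      have heq : (fun n : ℕ => 2 * Real.exp (-(n:ℝ) * (δ^2 / (2 * M^2 * v))))
          = fun n : ℕ => 2 * (Real.exp (-(δ^2 / (2 * M^2 * v))))^n := by
        funext n
        rw [← Real.exp_nat_mul]
        ring_nf
      rw [heq]
      exact (summable_geometric_of_lt_one (Real.exp_pos _).le
        (Real.exp_lt_one_iff.mpr (by linarith))).mul_left 2
    have hsum : (∑' n, P (A n)) ≠ ⊤ :=
      ne_top_of_le_ne_top ENNReal.ofReal_ne_top
        (le_trans (ENNReal.tsum_le_tsum hle)
          (le_of_eq (ENNReal.ofReal_tsum_of_nonneg (fun n => by positivity) hsummable).symm))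
    filter_upwards [MeasureTheory.ae_eventually_notMem hsum] with ω hω
    filter_upwards [hω, Filter.eventually_ge_atTop 1] with n hn hge
    have hnpos : (0:ℝ) < n := by exact_mod_cast hge
    simp only [hA, Set.mem_union, Set.mem_setOf_eq, not_or, not_le] at hn
    obtain ⟨h1, h2⟩ := hn
    have hsneg : ∑ i ∈ Finset.Icc 1 n, (-b i) * ε i ω
        = -(∑ i ∈ Finset.Icc 1 n, b i * ε i ω) := by
      rw [← Finset.sum_neg_distrib]
      exact Finset.sum_congr rfl (fun i _ => by ring)
    rw [hsneg] at h2
    have habs : |∑ i ∈ Finset.Icc 1 n, b i * ε i ω| < (n:ℝ) * δ :=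
      abs_lt.mpr ⟨by linarith, h1⟩
    rw [abs_mul, abs_of_nonneg (by positivity : (0:ℝ) ≤ 1/(n:ℝ)), one_div,
      inv_mul_lt_iff₀ hnpos]
    linarith [habs]
  have keyQ : ∀ᵐ ω ∂P, ∀ k : ℕ, ∀ᶠ n : ℕ in atTop,
      |(1/(n:ℝ)) * ∑ i ∈ Finset.Icc 1 n, b i * ε i ω| < 1/((k:ℝ)+1) := by
    rw [ae_all_iff]
    intro k
    exact key2 (1/((k:ℝ)+1)) (by positivity)
  filter_upwards [keyQ] with ω hω
  rw [NormedAddCommGroup.tendsto_nhds_zero]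
  intro e he
  obtain ⟨k, hk⟩ := exists_nat_one_div_lt he
  filter_upwards [hω k] with n hn
  rw [Real.norm_eq_abs]
  exact lt_trans hn hk

lemma tendsto_icc_of_range {u : ℕ → ℝ} {L : ℝ}
    (h : Tendsto (fun n : ℕ => (∑ i ∈ Finset.range n, u i) / n) atTop (𝓝 L)) :
    Tendsto (fun n : ℕ => (1/(n:ℝ)) * ∑ i ∈ Finset.Icc 1 n, u i) atTop (𝓝 L) := by
  have hid : ∀ n : ℕ, ∑ i ∈ Finset.Icc 1 n, u i = (∑ i ∈ Finset.range (n+1), u i) - u 0 := by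
    intro n
    have h1 : Finset.range (n+1) = Finset.Icc 0 n := by
      rw [Finset.range_eq_Ico, Finset.Ico_add_one_right_eq_Icc]
    have h2 : Finset.Icc 0 n = insert 0 (Finset.Icc 1 n) := by
      ext i
      simp only [Finset.mem_Icc, Finset.mem_insert]
      omega
    rw [h1, h2, Finset.sum_insert (by simp)]
    ring
  have hT : Tendsto (fun n : ℕ =>
      (1 + 1/(n:ℝ)) * ((∑ i ∈ Finset.range (n+1), u i) / ((n:ℝ)+1)) - u 0 * (1/(n:ℝ)))
      atTop (𝓝 ((1 + 0) * L - u 0 * 0)) := by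
    refine Tendsto.sub (Tendsto.mul (tendsto_const_nhds.add tendsto_one_div_atTop_nhds_zero_nat) ?_)
      ((tendsto_one_div_atTop_nhds_zero_nat).const_mul (u 0))
    have := h.comp (tendsto_add_atTop_nat 1)
    refine this.congr (fun n => ?_)
    simp only [Function.comp_apply]
    push_cast
    ring_nf
  simp only [add_zero, mul_zero, one_mul, sub_zero] at hT
  refine hT.congr' ?_
  filter_upwards [Filter.eventually_ge_atTop 1] with n hn
  have hn0 : (n:ℝ) ≠ 0 := Nat.cast_ne_zero.mpr (by omega)
  have hn1 : (n:ℝ) + 1 ≠ 0 := by positivity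
  rw [hid n]
  field_simp

lemma normalPdf_pos (y μ : ℝ) {s : ℝ} (hs : 0 < s) : 0 < normalPdf y μ s := by
  unfold normalPdf
  have h1 : (0:ℝ) < Real.sqrt (2 * π * s) := Real.sqrt_pos.mpr (by positivity)
  positivity

lemma log_normalPdf_ratio {s v : ℝ} (hs : 0 < s) (hv : 0 < v) (y μ₁ μ₂ : ℝ) :
    Real.log (normalPdf y μ₁ s / normalPdf y μ₂ v)
      = (1/2) * Real.log (v/s)
        + (1/(2*v) - 1/(2*s)) * (y - μ₂)^2
        + (-((μ₂ - μ₁)/s)) * (y - μ₂)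
        + (-(μ₂ - μ₁)^2/(2*s)) := by
  have h2πs : (0:ℝ) < 2*π*s := by positivity
  have h2πv : (0:ℝ) < 2*π*v := by positivity
  have hss : (0:ℝ) < Real.sqrt (2*π*s) := Real.sqrt_pos.mpr h2πs
  have hsv : (0:ℝ) < Real.sqrt (2*π*v) := Real.sqrt_pos.mpr h2πv
  rw [Real.log_div (normalPdf_pos y μ₁ hs).ne' (normalPdf_pos y μ₂ hv).ne']
  unfold normalPdf
  rw [Real.log_mul (by positivity) (Real.exp_pos _).ne',
      Real.log_mul (by positivity) (Real.exp_pos _).ne',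
      Real.log_inv, Real.log_inv, Real.log_sqrt h2πs.le, Real.log_sqrt h2πv.le,
      Real.log_exp, Real.log_exp,
      show (2*π*s) = (2*π)*s by ring, show (2*π*v) = (2*π)*v by ring,
      Real.log_mul (by positivity) hs.ne', Real.log_mul (by positivity) hv.ne',
      Real.log_div hv.ne' hs.ne']
  field_simp
  ring

/-- **Asymptotic equipartition for the forward linear regression model.**  The true model
is `y_i = η₀(x_i) + ε_i` with `ε_i` i.i.d. `N(0, σ₀²)`, the design `(x_i) ⊆ 𝒳` (compact,
of positive Lebesgue measure) satisfies the Riemann-sum condition, and the linear model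
`M₁` has likelihood ratio
`R_n(θ) = ∏_{i=1}^n φ(y_i; α+βx_i, σ_ε²)/φ(y_i; η₀(x_i), σ₀²)`.  Then for every
`θ = (α, β, σ_ε²)` with `σ_ε² > 0`, almost surely `(1/n) log R_n(θ) → -h₁(θ)`, and
moreover `(1/n) E[log R_n(θ)] → -h₁(θ)`. -/
theorem linear_regression_equipartition
    (𝒳 : Set ℝ) (hXmeas : MeasurableSet 𝒳) (hXcomp : IsCompact 𝒳)
    (hXvol : 0 < (volume 𝒳).toReal)
    (η₀ : ℝ → ℝ) (hη₀ : ContinuousOn η₀ 𝒳)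
    (v₀ : NNReal) (hv₀ : 0 < v₀)
    -- the fixed design and its Riemann-sum property
    (x : ℕ → ℝ) (hx : ∀ i, x i ∈ 𝒳)
    (hriemann : ∀ g : ℝ → ℝ, ContinuousOn g 𝒳 →
      Tendsto (fun n : ℕ => (1 / (n : ℝ)) * ∑ i ∈ Finset.Icc 1 n, g (x i)) atTop
        (nhds (EX 𝒳 g)))
    -- the i.i.d. `N(0, σ₀²)` errors and the responses of the true model
    {Ω : Type*} [MeasurableSpace Ω] (P : Measure Ω) [IsProbabilityMeasure P]
    (ε : ℕ → Ω → ℝ) (hεmeas : ∀ i, Measurable (ε i))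
    (hεindep : iIndepFun ε P)
    (hεdist : ∀ i, P.map (ε i) = gaussianReal 0 v₀)
    (y : ℕ → Ω → ℝ) (hy : ∀ i ω, y i ω = η₀ (x i) + ε i ω) :
    ∀ α β s : ℝ, 0 < s →
      ((∀ᵐ ω ∂P, Tendsto
          (fun n : ℕ => (1 / (n : ℝ)) * Real.log (∏ i ∈ Finset.Icc 1 n,
            normalPdf (y i ω) (α + β * x i) s / normalPdf (y i ω) (η₀ (x i)) (v₀ : ℝ)))
          atTop (nhds (-hLin 𝒳 η₀ (v₀ : ℝ) α β s))) ∧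
        Tendsto
          (fun n : ℕ => (1 / (n : ℝ)) * ∫ ω, Real.log (∏ i ∈ Finset.Icc 1 n,
            normalPdf (y i ω) (α + β * x i) s / normalPdf (y i ω) (η₀ (x i)) (v₀ : ℝ)) ∂P)
          atTop (nhds (-hLin 𝒳 η₀ (v₀ : ℝ) α β s))) := by
  intro α β s hs
  have hv0 : (0:ℝ) < (v₀:ℝ) := by exact_mod_cast hv₀
  have hv0' : v₀ ≠ 0 := hv₀.ne'
  set d : ℕ → ℝ := fun i => η₀ (x i) - α - β * x i with hd
  set g : ℝ → ℝ := fun t => (η₀ t - α - β * t)^2 with hg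
  have hφcont : ContinuousOn (fun t => η₀ t - α - β * t) 𝒳 :=
    (hη₀.sub continuousOn_const).sub (continuous_const.mul continuous_id).continuousOn
  have hgcont : ContinuousOn g 𝒳 := hφcont.pow 2
  obtain ⟨M₀, hM₀⟩ := hXcomp.exists_bound_of_continuousOn hφcont
  set M : ℝ := |M₀| + 1 with hM'
  have hM : 0 < M := by positivity
  have hdM : ∀ i, |d i| ≤ M := by
    intro i
    refine le_trans (hM₀ (x i) (hx i)) ?_
    rw [hM']
    linarith [le_abs_self M₀]
  set C : ℝ := (1/2) * Real.log ((v₀:ℝ)/s) with hC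
  set A : ℝ := 1/(2*(v₀:ℝ)) - 1/(2*s) with hA
  set bb : ℕ → ℝ := fun i => -(d i / s) with hbb
  set cc : ℕ → ℝ := fun i => -(d i)^2/(2*s) with hcc
  -- pointwise identity
  have hterm : ∀ i ω, Real.log (normalPdf (y i ω) (α + β * x i) s
        / normalPdf (y i ω) (η₀ (x i)) (v₀:ℝ))
      = C + A * (ε i ω)^2 + bb i * (ε i ω) + cc i := by
    intro i ω
    have h := log_normalPdf_ratio hs hv0 (y i ω) (α + β * x i) (η₀ (x i))
    rw [h, hy i ω]
    simp only [hC, hA, hbb, hcc, hd]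
    ring
  have hlogprod : ∀ ω n, Real.log (∏ i ∈ Finset.Icc 1 n,
        normalPdf (y i ω) (α + β * x i) s / normalPdf (y i ω) (η₀ (x i)) (v₀:ℝ))
      = ∑ i ∈ Finset.Icc 1 n, (C + A * (ε i ω)^2 + bb i * (ε i ω) + cc i) := by
    intro ω n
    rw [Real.log_prod]
    · exact Finset.sum_congr rfl fun i _ => hterm i ω
    · intro i _
      exact div_ne_zero (normalPdf_pos _ _ hs).ne' (normalPdf_pos _ _ hv0).ne'
  -- deterministic limit
  have hL3 : Tendsto (fun n : ℕ => (1/(n:ℝ)) * ∑ i ∈ Finset.Icc 1 n, cc i) atTop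
      (𝓝 (-(1/(2*s)) * EX 𝒳 g)) := by
    have h := (hriemann g hgcont).const_mul (-(1/(2*s)))
    refine Tendsto.congr (fun n => ?_) h
    have hsum : ∑ i ∈ Finset.Icc 1 n, cc i
        = -(1/(2*s)) * ∑ i ∈ Finset.Icc 1 n, g (x i) := by
      rw [Finset.mul_sum]
      exact Finset.sum_congr rfl fun i _ => by simp only [hcc, hg, hd]; ring
    rw [hsum]
    ring
  -- SLLN for squares
  have hL1 : ∀ᵐ ω ∂P, Tendsto (fun n : ℕ => (1/(n:ℝ)) * ∑ i ∈ Finset.Icc 1 n, (ε i ω)^2)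
      atTop (𝓝 (v₀:ℝ)) := by
    have hint : Integrable (fun ω => (ε 0 ω)^2) P :=
      rv_integrable_comp (hεmeas 0) (hεdist 0) (measurable_id.pow_const 2)
        (integrable_sq_gaussianReal hv0')
    have hindep : Pairwise (Function.onFun (IndepFun · · P) (fun i ω => (ε i ω)^2)) :=
      fun i j hij => (hεindep.indepFun hij).comp
        (measurable_id.pow_const 2) (measurable_id.pow_const 2)
    have hident : ∀ i, IdentDistrib (fun ω => (ε i ω)^2) (fun ω => (ε 0 ω)^2) P P := by
      intro i
      have hii : IdentDistrib (ε i) (ε 0) P P :=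
        ⟨(hεmeas i).aemeasurable, (hεmeas 0).aemeasurable, by rw [hεdist i, hεdist 0]⟩
      exact hii.comp (measurable_id.pow_const 2)
    have hsl := strong_law_ae_real _ hint hindep hident
    have hmean : ∫ ω, (ε 0 ω)^2 ∂P = (v₀:ℝ) := by
      rw [rv_integral_comp (hεmeas 0) (hεdist 0) (g := fun x => x^2)
        (measurable_id.pow_const 2), integral_sq_gaussianReal hv0']
    filter_upwards [hsl] with ω hω
    rw [hmean] at hω
    exact tendsto_icc_of_range hω
  -- cross term
  have hL2 : ∀ᵐ ω ∂P, Tendsto (fun n : ℕ => (1/(n:ℝ)) * ∑ i ∈ Finset.Icc 1 n, bb i * ε i ω)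
      atTop (𝓝 0) := by
    refine cross_term_tendsto P ε hεmeas hεindep v₀ hv0' hεdist bb (M/s) (by positivity) ?_
    intro i
    rw [hbb]
    rw [abs_neg, abs_div, abs_of_pos hs]
    exact (div_le_div_iff_of_pos_right hs).mpr (hdM i)
  -- the limit identity
  have htarget : -hLin 𝒳 η₀ (v₀:ℝ) α β s = C + A*(v₀:ℝ) + (-(1/(2*s)) * EX 𝒳 g) := by
    have hlog : Real.log ((v₀:ℝ)/s) = -Real.log (s/(v₀:ℝ)) := by
      rw [← Real.log_inv, inv_div]
    rw [hLin, hC, hA, hlog, hg]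
    field_simp
    ring
  -- integrability of per-term functions
  have hint1 : ∀ i, Integrable (fun ω => (ε i ω)^2) P := fun i =>
    rv_integrable_comp (hεmeas i) (hεdist i) (measurable_id.pow_const 2)
      (integrable_sq_gaussianReal hv0')
  have hint2 : ∀ i, Integrable (ε i) P := fun i =>
    rv_integrable_comp (hεmeas i) (hεdist i) measurable_id
      (integrable_id_gaussianReal hv0')
  have hint_i : ∀ i, Integrable (fun ω => C + A * (ε i ω)^2 + bb i * ε i ω + cc i) P :=
    fun i => (((integrable_const C).add ((hint1 i).const_mul A)).add
      ((hint2 i).const_mul (bb i))).add (integrable_const (cc i))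
  have hI_i : ∀ i, ∫ ω, (C + A * (ε i ω)^2 + bb i * ε i ω + cc i) ∂P
      = C + A*(v₀:ℝ) + cc i := by
    intro i
    have ha : Integrable (fun ω => C + A * (ε i ω)^2) P := by
      exact (integrable_const C).add ((hint1 i).const_mul A)
    have hb : Integrable (fun ω => C + A * (ε i ω)^2 + bb i * ε i ω) P := by
      exact ha.add ((hint2 i).const_mul (bb i))
    have he1 : ∫ ω, (ε i ω)^2 ∂P = (v₀:ℝ) := by
      rw [rv_integral_comp (hεmeas i) (hεdist i) (g := fun x => x^2)
        (measurable_id.pow_const 2), integral_sq_gaussianReal hv0']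
    have he2 : ∫ ω, ε i ω ∂P = 0 := by
      rw [rv_integral_comp (hεmeas i) (hεdist i) (g := fun x => x)
        measurable_id, integral_id_gaussianReal hv0']
    rw [integral_add hb (integrable_const _),
      integral_add ha ((hint2 i).const_mul (bb i)),
      integral_add (integrable_const C) ((hint1 i).const_mul A),
      integral_const, integral_const_mul, integral_const_mul, he1, he2]
    simp
  constructor
  · -- almost sure part
    filter_upwards [hL1, hL2] with ω h1 h2
    have hT : Tendsto (fun n : ℕ =>
        C + A * ((1/(n:ℝ)) * ∑ i ∈ Finset.Icc 1 n, (ε i ω)^2)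
          + (1/(n:ℝ)) * ∑ i ∈ Finset.Icc 1 n, bb i * ε i ω
          + (1/(n:ℝ)) * ∑ i ∈ Finset.Icc 1 n, cc i) atTop
        (𝓝 (C + A * (v₀:ℝ) + 0 + (-(1/(2*s)) * EX 𝒳 g))) :=
      ((tendsto_const_nhds.add (h1.const_mul A)).add h2).add hL3
    have hlim : C + A * (v₀:ℝ) + 0 + (-(1/(2*s)) * EX 𝒳 g)
        = -hLin 𝒳 η₀ (v₀:ℝ) α β s := by rw [htarget]; ring
    rw [hlim] at hT
    refine hT.congr' ?_
    filter_upwards [Filter.eventually_ge_atTop 1] with n hn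
    have hn0 : (n:ℝ) ≠ 0 := Nat.cast_ne_zero.mpr (by omega)
    rw [hlogprod ω n, Finset.sum_add_distrib, Finset.sum_add_distrib, Finset.sum_add_distrib,
      Finset.sum_const, Nat.card_Icc, Nat.add_sub_cancel, nsmul_eq_mul, ← Finset.mul_sum]
    field_simp
  · -- expectation part
    have hT : Tendsto (fun n : ℕ =>
        (C + A * (v₀:ℝ)) + (1/(n:ℝ)) * ∑ i ∈ Finset.Icc 1 n, cc i) atTop
        (𝓝 ((C + A * (v₀:ℝ)) + (-(1/(2*s)) * EX 𝒳 g))) :=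
      tendsto_const_nhds.add hL3
    have hlim : (C + A * (v₀:ℝ)) + (-(1/(2*s)) * EX 𝒳 g)
        = -hLin 𝒳 η₀ (v₀:ℝ) α β s := by rw [htarget]
    rw [hlim] at hT
    refine hT.congr' ?_
    filter_upwards [Filter.eventually_ge_atTop 1] with n hn
    have hn0 : (n:ℝ) ≠ 0 := Nat.cast_ne_zero.mpr (by omega)
    rw [integral_congr_ae (Filter.Eventually.of_forall (fun ω => hlogprod ω n)),
      integral_finset_sum _ (fun i _ => (hint_i i))]
    have hsumI : ∑ i ∈ Finset.Icc 1 n, (∫ ω, (C + A * (ε i ω)^2 + bb i * ε i ω + cc i) ∂P)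
        = ∑ i ∈ Finset.Icc 1 n, (C + A*(v₀:ℝ) + cc i) :=
      Finset.sum_congr rfl fun i _ => hI_i i
    rw [hsumI, Finset.sum_add_distrib, Finset.sum_const, Nat.card_Icc, Nat.add_sub_cancel,
      nsmul_eq_mul]
    field_simp
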